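/- Let p, q, θ ∈ ℝ, s := cos(θ)·1 + sin(θ)·kℓ, and let B be the 3×3 octonionic Hermitian matrix with rows (p, q·i, q·(k·s)), (−q·i, p, q·j), (−q·(k·s), −q·j, p). Fix (ε, S) equal to (+1, −kℓ) or (−1, 1), and set u := (i, 0, j)·S, v := (j, 2·k·s, i)·S, w := (j, −k·s, i)·S (componentwise right multiplication), λᵤ := p + ε·q·conj(s), λᵥ := p + ε·q·conj(s), λ_w := p − 2·ε·q·conj(s). Then B admits both decompositions: for all indices α, β, Bₐᵦ = λᵤ·(uₐ·conj(uᵦ))/2 + λᵥ·(vₐ·conj(vᵦ))/6 + λ_w·(wₐ·conj(wᵦ))/3, and also Bₐᵦ = ((uₐ·λᵤ)·conj(uᵦ))/2 + ((vₐ·λᵥ)·conj(vᵦ))/6 + ((wₐ·λ_w)·conj(wᵦ))/3. (Here 2, 6, 3 are the squared norms of u, v, w.) -/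

import Mathlib

noncomputable section

open Quaternion

/-- The octonions, realized as the Cayley–Dickson double of the real quaternions:
pairs of quaternions. -/
abbrev 𝕆 : Type := ℍ[ℝ] × ℍ[ℝ]

namespace Octonion

/-- Cayley–Dickson multiplication: `(a, b)·(c, d) = (a·c − conj(d)·b, d·a + b·conj(c))`. -/
def omul (x y : 𝕆) : 𝕆 :=
  (x.1 * y.1 - star y.2 * x.2, y.2 * x.1 + x.2 * star y.1)

/-- Octonionic conjugation: `conj (a, b) = (conj a, −b)`. -/
def oconj (x : 𝕆) : 𝕆 := (star x.1, -x.2)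

/-- The embedding of the reals, `r ↦ (r, 0)`. -/
def oR (r : ℝ) : 𝕆 := ((r : ℍ[ℝ]), 0)

/-- The unit octonion `1 = (1, 0)`. -/
def o1 : 𝕆 := oR 1

/-- The associator `[a,b,c] = (a·b)·c − a·(b·c)`. -/
def oassoc (a b c : 𝕆) : 𝕆 := omul (omul a b) c - omul a (omul b c)

/-- The inner product: the real number with `(a·conj b + b·conj a)/2 = (a ⋅ b)·1`. -/
def odot (x y : 𝕆) : ℝ := (omul x (oconj y) + omul y (oconj x)).1.re / 2

/-- The squared norm `|x|²`, the real number with `x·conj x = |x|²·1`. -/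
def onormSq (x : 𝕆) : ℝ := odot x x

/-- The real part of an octonion, as a real number. -/
def oreR (x : 𝕆) : ℝ := x.1.re

/-- The imaginary part `Im(x) = (x − conj x)/2`. -/
def oIm (x : 𝕆) : 𝕆 := (2:ℝ)⁻¹ • (x - oconj x)

/-- The imaginary units. -/
def oi : 𝕆 := (⟨0,1,0,0⟩, 0)
def oj : 𝕆 := (⟨0,0,1,0⟩, 0)
def ok : 𝕆 := (⟨0,0,0,1⟩, 0)
def ol : 𝕆 := (0, 1)
def oil : 𝕆 := (0, ⟨0,1,0,0⟩)
def ojl : 𝕆 := (0, ⟨0,0,1,0⟩)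
def okl : 𝕆 := (0, ⟨0,0,0,1⟩)

end Octonion


open Octonion

/-- `s = cos θ + sin θ kℓ`. -/
def sB (θ : ℝ) : 𝕆 := Real.cos θ • o1 + Real.sin θ • okl

/-- The matrix `B` of Example 1, with rows `(p, qi, q(ks))`, `(−qi, p, qj)`,
`(−q(ks), −qj, p)`. -/
def Bmat (p q θ : ℝ) : Fin 3 → Fin 3 → 𝕆 :=
  ![![oR p, q • oi, q • omul ok (sB θ)],
    ![-(q • oi), oR p, q • oj],
    ![-(q • omul ok (sB θ)), -(q • oj), oR p]]

/-- A quaternion literal typed as `ℍ[ℝ]`. -/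
def qm (a b c d : ℝ) : ℍ[ℝ] := ⟨a, b, c, d⟩

theorem qlit (a b c d : ℝ) : (⟨a, b, c, d⟩ : ℍ[ℝ]) = qm a b c d := rfl
@[simp] theorem qm_re (a b c d : ℝ) : (qm a b c d).re = a := rfl
@[simp] theorem qm_imI (a b c d : ℝ) : (qm a b c d).imI = b := rfl
@[simp] theorem qm_imJ (a b c d : ℝ) : (qm a b c d).imJ = c := rfl
@[simp] theorem qm_imK (a b c d : ℝ) : (qm a b c d).imK = d := rfl

set_option maxHeartbeats 10000000 in
set_option linter.all false in
/-- The two decompositions of the matrix `B` of Example 1: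
`Bₐᵦ = λᵤ(uₐ conj uᵦ)/2 + λᵥ(vₐ conj vᵦ)/6 + λ_w(wₐ conj wᵦ)/3`
and `Bₐᵦ = ((uₐ λᵤ) conj uᵦ)/2 + ((vₐ λᵥ) conj vᵦ)/6 + ((wₐ λ_w) conj wᵦ)/3`. -/
theorem example1_decompositions (p q θ ε : ℝ) (S : 𝕆)
    (hεS : (ε = 1 ∧ S = -okl) ∨ (ε = -1 ∧ S = o1)) :
    ∀ α β : Fin 3,
      (Bmat p q θ α β
        = (2:ℝ)⁻¹ • omul (oR p + (ε * q) • oconj (sB θ))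
            (omul (![omul oi S, omul 0 S, omul oj S] α)
              (oconj (![omul oi S, omul 0 S, omul oj S] β)))
          + (6:ℝ)⁻¹ • omul (oR p + (ε * q) • oconj (sB θ))
            (omul (![omul oj S, omul ((2:ℝ) • omul ok (sB θ)) S, omul oi S] α)
              (oconj (![omul oj S, omul ((2:ℝ) • omul ok (sB θ)) S, omul oi S] β)))
          + (3:ℝ)⁻¹ • omul (oR p - (2 * ε * q) • oconj (sB θ))
            (omul (![omul oj S, omul (-omul ok (sB θ)) S, omul oi S] α)
              (oconj (![omul oj S, omul (-omul ok (sB θ)) S, omul oi S] β))))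
      ∧ (Bmat p q θ α β
        = (2:ℝ)⁻¹ • omul (omul (![omul oi S, omul 0 S, omul oj S] α)
              (oR p + (ε * q) • oconj (sB θ)))
            (oconj (![omul oi S, omul 0 S, omul oj S] β))
          + (6:ℝ)⁻¹ • omul (omul (![omul oj S, omul ((2:ℝ) • omul ok (sB θ)) S, omul oi S] α)
              (oR p + (ε * q) • oconj (sB θ)))
            (oconj (![omul oj S, omul ((2:ℝ) • omul ok (sB θ)) S, omul oi S] β))
          + (3:ℝ)⁻¹ • omul (omul (![omul oj S, omul (-omul ok (sB θ)) S, omul oi S] α)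
              (oR p - (2 * ε * q) • oconj (sB θ)))
            (oconj (![omul oj S, omul (-omul ok (sB θ)) S, omul oi S] β))) := by
  have h : Real.sin θ ^ 2 = 1 - Real.cos θ ^ 2 := by
    nlinarith [Real.sin_sq_add_cos_sq θ]
  have h3 : Real.sin θ ^ 3 = Real.sin θ * (1 - Real.cos θ ^ 2) := by
    rw [pow_succ, h]; ring
  intro α β
  rcases hεS with ⟨hε, hS⟩ | ⟨hε, hS⟩ <;> subst hε <;> subst hS <;>
    fin_cases α <;> fin_cases β <;>
    refine ⟨?_, ?_⟩ <;>
  · simp only [Bmat, sB, omul, oconj, oR, o1, oi, oj, ok, okl, Fin.isValue,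
      Matrix.cons_val', Matrix.cons_val_zero, Matrix.cons_val_one, Matrix.head_cons,
      Matrix.cons_val_two, Matrix.tail_cons, Matrix.empty_val', Matrix.cons_val_fin_one,
      Matrix.head_fin_const, Fin.reduceFinMk, Matrix.cons_val,
      Prod.ext_iff, Prod.fst_add, Prod.snd_add, Prod.fst_sub, Prod.snd_sub,
      Prod.fst_neg, Prod.snd_neg, Prod.smul_fst, Prod.smul_snd, Prod.fst_zero, Prod.snd_zero,
      Quaternion.ext_iff, Quaternion.re_mul, Quaternion.imI_mul, Quaternion.imJ_mul,
      Quaternion.imK_mul, Quaternion.re_add, Quaternion.imI_add, Quaternion.imJ_add,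
      Quaternion.imK_add, Quaternion.re_sub, Quaternion.imI_sub, Quaternion.imJ_sub,
      Quaternion.imK_sub, Quaternion.re_neg, Quaternion.imI_neg, Quaternion.imJ_neg,
      Quaternion.imK_neg, Quaternion.re_smul, Quaternion.imI_smul, Quaternion.imJ_smul,
      Quaternion.imK_smul, Quaternion.re_star, Quaternion.imI_star, Quaternion.imJ_star,
      Quaternion.imK_star, Quaternion.re_zero, Quaternion.imI_zero, Quaternion.imJ_zero,
      Quaternion.imK_zero, Quaternion.re_coe, Quaternion.imI_coe, Quaternion.imJ_coe,
      Quaternion.imK_coe, Quaternion.re_one, Quaternion.imI_one, Quaternion.imJ_one,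
      Quaternion.imK_one, smul_eq_mul, qlit, qm_re, qm_imI, qm_imJ, qm_imK]
    try norm_num
    repeat' apply And.intro
    all_goals try ring_nf
    all_goals try simp only [h, h3]
    all_goals try ring_nf
    all_goals try ring
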